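/- arXiv:2210.06921 — 3 statements merged into one kernel-verified Lean document; each statement's English description precedes it below -/
import Mathlib

section
/- (Theorem 1, KL part.) Let r > 0, W > 0, and let (y_{1,1},…,y_{1,n}) and (y_{2,1},…,y_{2,n}) be two datasets in Y^n with max_i ‖y_{1,i}‖ < r and max_i ‖y_{2,i}‖ < r. Under Assumptions 1–2, there exist constants a, b > 0 depending only on the prior ρ0 and on r such that the Gibbs posteriors ρ̂_{n,1}^W and ρ̂_{n,2}^W built from the two datasets satisfy max( D_KL(ρ̂_{n,1}^W‖ρ̂_{n,2}^W), D_KL(ρ̂_{n,2}^W‖ρ̂_{n,1}^W) ) ≤ a W (1 + e^{bnW})² ∑_{i=1}^n ‖y_{1,i} − y_{2,i}‖. -/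
open MeasureTheory Real Filter Topology
open scoped ENNReal NNReal

noncomputable section

abbrev Par (p : ℕ) := EuclideanSpace ℝ (Fin p)
abbrev Obs (d : ℕ) := EuclideanSpace ℝ (Fin d)

open scoped Classical in
/-- Kullback–Leibler divergence; `⊤` if `μ` is not absolutely continuous w.r.t. `ν`
or the log-density is not integrable. -/
noncomputable def klDiv {α : Type*} [MeasurableSpace α] (μ ν : Measure α) : EReal :=
  if μ ≪ ν ∧ Integrable (fun x => Real.log (μ.rnDeriv ν x).toReal) μ
  then ((∫ x, Real.log (μ.rnDeriv ν x).toReal ∂μ : ℝ) : EReal)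
  else ⊤

/-- Squared Hellinger distance. -/
noncomputable def hellingerSq {α : Type*} [MeasurableSpace α] (μ ν : Measure α) : ℝ :=
  (1 / 2) * ∫ x, (Real.sqrt ((μ.rnDeriv (μ + ν) x).toReal)
      - Real.sqrt ((ν.rnDeriv (μ + ν) x).toReal)) ^ 2 ∂(μ + ν)

/-- Empirical risk `R_n`. -/
noncomputable def empRisk {p d n : ℕ} (L : Par p → Obs d → ℝ) (ys : Fin n → Obs d)
    (θ : Par p) : ℝ :=
  (1 / (n : ℝ)) * ∑ i, L θ (ys i)

/-- Partition function `Z_n^W`. -/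
noncomputable def partition {p d n : ℕ} (ρ0 : Measure (Par p)) (L : Par p → Obs d → ℝ)
    (ys : Fin n → Obs d) (W : ℝ) : ℝ :=
  ∫ θ, Real.exp (-(n * W) * empRisk L ys θ) ∂ρ0

/-- Gibbs posterior `ρ̂_n^W`. -/
noncomputable def gibbs {p d n : ℕ} (ρ0 : Measure (Par p)) (L : Par p → Obs d → ℝ)
    (ys : Fin n → Obs d) (W : ℝ) : Measure (Par p) :=
  ρ0.withDensity
    (fun θ => ENNReal.ofReal (Real.exp (-(n * W) * empRisk L ys θ) / partition ρ0 L ys W))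

/-- Assumption 1 on the loss. -/
structure Assumption1 {p d : ℕ} (ρ0 : Measure (Par p)) (P : Measure (Obs d))
    (L : Par p → Obs d → ℝ) : Prop where
  measurable : Measurable (Function.uncurry L)
  nonneg : ∀ θ y, 0 ≤ L θ y
  dominated : ∃ K : Par p × Obs d → ℝ, Integrable K (ρ0.prod P) ∧ ∀ θ y, L θ y ≤ K (θ, y)
  lipschitz_param : ∀ r > 0, ∃ C1 : Obs d → ℝ, (∀ y, 0 ≤ C1 y) ∧ Integrable C1 P ∧
    ∀ θ1 θ2 y, ‖θ1‖ < r → ‖θ2‖ < r → |L θ1 y - L θ2 y| ≤ C1 y * ‖θ1 - θ2‖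
  lipschitz_data : ∀ r > 0, ∃ C2 : Par p → ℝ, (∀ θ, 0 ≤ C2 θ) ∧
    Integrable (fun θ => Real.exp (C2 θ)) ρ0 ∧
    ∀ θ y1 y2, ‖y1‖ < r → ‖y2‖ < r → |L θ y1 - L θ y2| ≤ C2 θ * ‖y1 - y2‖

/-- Assumption 2 on the prior: everywhere-positive, locally log-Lipschitz Lebesgue density. -/
structure Assumption2 {p : ℕ} (ρ0 : Measure (Par p)) (f : Par p → ℝ) : Prop where
  density : ρ0 = volume.withDensity (fun θ => ENNReal.ofReal (f θ))
  pos : ∀ θ, 0 < f θ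
  logLip : ∀ r > 0, ∃ C3 : ℝ, ∀ θ1 θ2, ‖θ1‖ < r → ‖θ2‖ < r →
    |Real.log (f θ1) - Real.log (f θ2)| ≤ C3 * ‖θ1 - θ2‖


section GibbsHelpers

variable {p d n : ℕ} {L : Par p → Obs d → ℝ}

private lemma measurable_L_slice (hm : Measurable (Function.uncurry L)) (y : Obs d) :
    Measurable (fun θ => L θ y) :=
  hm.comp (measurable_id.prodMk measurable_const)

private lemma empRisk_measurable (hm : Measurable (Function.uncurry L)) (ys : Fin n → Obs d) :
    Measurable (empRisk L ys) := by
  unfold empRisk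
  exact (Finset.measurable_sum _ fun i _ => measurable_L_slice hm (ys i)).const_mul _

private lemma empRisk_nonneg (hnn : ∀ θ y, 0 ≤ L θ y) (ys : Fin n → Obs d) (θ : Par p) :
    0 ≤ empRisk L ys θ :=
  mul_nonneg (by positivity) (Finset.sum_nonneg fun i _ => hnn θ (ys i))

private lemma n_mul_empRisk (ys : Fin n → Obs d) (θ : Par p) :
    (n : ℝ) * empRisk L ys θ = ∑ i, L θ (ys i) := by
  unfold empRisk
  rcases Nat.eq_zero_or_pos n with hn | hn
  · subst hn; simp
  · have h : (n : ℝ) ≠ 0 := Nat.cast_ne_zero.mpr hn.ne'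
    field_simp

private lemma abs_exp_neg_sub (a b : ℝ) (ha : 0 ≤ a) (hb : 0 ≤ b) :
    |Real.exp (-a) - Real.exp (-b)| ≤ |a - b| := by
  wlog hab : b ≤ a generalizing a b
  · rw [abs_sub_comm, abs_sub_comm a b]
    exact this b a hb ha (le_of_not_ge hab)
  have h1 : Real.exp (-a) ≤ Real.exp (-b) := Real.exp_le_exp.mpr (by linarith)
  rw [abs_of_nonpos (by linarith), abs_of_nonneg (by linarith)]
  have h2 : Real.exp (-b) ≤ 1 := Real.exp_le_one_iff.mpr (by linarith)
  have h3 : Real.exp (-a) = Real.exp (-b) * Real.exp (b - a) := by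
    rw [← Real.exp_add]; ring_nf
  have h4 : (b - a) + 1 ≤ Real.exp (b - a) := Real.add_one_le_exp _
  have h5 : 0 < Real.exp (-b) := Real.exp_pos _
  nlinarith

private lemma integrable_expRisk (ρ0 : Measure (Par p)) [IsProbabilityMeasure ρ0]
    (hm : Measurable (Function.uncurry L)) (hnn : ∀ θ y, 0 ≤ L θ y)
    (ys : Fin n → Obs d) {W : ℝ} (hW : 0 ≤ W) :
    Integrable (fun θ => Real.exp (-(n * W) * empRisk L ys θ)) ρ0 := by
  refine Integrable.mono' (integrable_const 1) ?_ (ae_of_all _ fun θ => ?_)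
  · exact (((empRisk_measurable hm ys).const_mul _).exp).aestronglyMeasurable
  · rw [Real.norm_eq_abs, abs_of_pos (Real.exp_pos _)]
    refine Real.exp_le_one_iff.mpr ?_
    have : 0 ≤ (n : ℝ) * W := by positivity
    nlinarith [empRisk_nonneg hnn ys θ]

private lemma partition_pos (ρ0 : Measure (Par p)) [IsProbabilityMeasure ρ0]
    (hm : Measurable (Function.uncurry L)) (hnn : ∀ θ y, 0 ≤ L θ y)
    (ys : Fin n → Obs d) {W : ℝ} (hW : 0 ≤ W) :
    0 < partition ρ0 L ys W := by
  unfold partition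
  rw [integral_pos_iff_support_of_nonneg (fun θ => (Real.exp_pos _).le)
      (integrable_expRisk ρ0 hm hnn ys hW)]
  have hsupp : (Function.support fun θ => Real.exp (-(n * W) * empRisk L ys θ)) = Set.univ := by
    ext θ; simp [Function.mem_support, Real.exp_ne_zero]
  rw [hsupp, measure_univ]
  norm_num

private lemma gibbs_isProbability (ρ0 : Measure (Par p)) [IsProbabilityMeasure ρ0]
    (hm : Measurable (Function.uncurry L)) (hnn : ∀ θ y, 0 ≤ L θ y)
    (ys : Fin n → Obs d) {W : ℝ} (hW : 0 ≤ W) :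
    IsProbabilityMeasure (gibbs ρ0 L ys W) := by
  have hZ : 0 < partition ρ0 L ys W := partition_pos ρ0 hm hnn ys hW
  constructor
  rw [gibbs, withDensity_apply _ MeasurableSet.univ, Measure.restrict_univ]
  have hint : Integrable
      (fun θ => Real.exp (-(n * W) * empRisk L ys θ) / partition ρ0 L ys W) ρ0 :=
    (integrable_expRisk ρ0 hm hnn ys hW).div_const _
  rw [← MeasureTheory.ofReal_integral_eq_lintegral_ofReal hint
      (ae_of_all _ fun θ => by positivity)]
  rw [integral_div,
    show (∫ θ, Real.exp (-(n * W) * empRisk L ys θ) ∂ρ0) = partition ρ0 L ys W from rfl,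
    div_self hZ.ne', ENNReal.ofReal_one]

end GibbsHelpers


section KeyLemma

variable {p d n : ℕ} {L : Par p → Obs d → ℝ}

private lemma kl_one_sided (ρ0 : Measure (Par p)) [IsProbabilityMeasure ρ0]
    (hm : Measurable (Function.uncurry L)) (hnn : ∀ θ y, 0 ≤ L θ y)
    {C2 : Par p → ℝ} (hC2nn : ∀ θ, 0 ≤ C2 θ) (hC2int : Integrable C2 ρ0)
    {W : ℝ} (hW : 0 < W) (ys1 ys2 : Fin n → Obs d)
    (hdiff : ∀ θ, |(∑ i, L θ (ys1 i)) - ∑ i, L θ (ys2 i)| ≤ C2 θ * ∑ i, ‖ys1 i - ys2 i‖)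
    {δ E : ℝ} (hδ : 0 < δ) (hE : 1 ≤ E)
    (hZ1 : δ * E⁻¹ ≤ partition ρ0 L ys1 W) :
    klDiv (gibbs ρ0 L ys1 W) (gibbs ρ0 L ys2 W)
      ≤ ((2 * (∫ θ, C2 θ ∂ρ0) / δ * E * W * ∑ i, ‖ys1 i - ys2 i‖ : ℝ) : EReal) := by
  have hEpos : (0:ℝ) < E := lt_of_lt_of_le one_pos hE
  set S := ∑ i, ‖ys1 i - ys2 i‖ with hSdef
  have hS : 0 ≤ S := Finset.sum_nonneg fun i _ => norm_nonneg _
  set J := ∫ θ, C2 θ ∂ρ0 with hJdef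
  have hJ : 0 ≤ J := integral_nonneg hC2nn
  have hR1m : Measurable (empRisk L ys1) := empRisk_measurable hm ys1
  have hR2m : Measurable (empRisk L ys2) := empRisk_measurable hm ys2
  have hnW : (0:ℝ) ≤ (n:ℝ) * W := by positivity
  set Z1 := partition ρ0 L ys1 W with hZ1def
  set Z2 := partition ρ0 L ys2 W with hZ2def
  have hZ1pos : 0 < Z1 := partition_pos ρ0 hm hnn ys1 hW.le
  have hZ2pos : 0 < Z2 := partition_pos ρ0 hm hnn ys2 hW.le
  set g1 : Par p → ℝ := fun θ => Real.exp (-(n * W) * empRisk L ys1 θ) with hg1def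
  set g2 : Par p → ℝ := fun θ => Real.exp (-(n * W) * empRisk L ys2 θ) with hg2def
  have hg1m : Measurable g1 := (hR1m.const_mul _).exp
  have hg2m : Measurable g2 := (hR2m.const_mul _).exp
  have hg1pos : ∀ θ, 0 < g1 θ := fun θ => Real.exp_pos _
  have hg2pos : ∀ θ, 0 < g2 θ := fun θ => Real.exp_pos _
  have hg1le : ∀ θ, g1 θ ≤ 1 := fun θ => Real.exp_le_one_iff.mpr
    (by nlinarith [empRisk_nonneg hnn ys1 θ])
  have hg1int : Integrable g1 ρ0 := integrable_expRisk ρ0 hm hnn ys1 hW.le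
  have hg2int : Integrable g2 ρ0 := integrable_expRisk ρ0 hm hnn ys2 hW.le
  set h1 : Par p → ℝ≥0∞ := fun θ => ENNReal.ofReal (g1 θ / Z1) with hh1def
  set h2 : Par p → ℝ≥0∞ := fun θ => ENNReal.ofReal (g2 θ / Z2) with hh2def
  have hh1m : Measurable h1 := ENNReal.measurable_ofReal.comp (hg1m.div_const _)
  have hh2m : Measurable h2 := ENNReal.measurable_ofReal.comp (hg2m.div_const _)
  have hμ1 : gibbs ρ0 L ys1 W = ρ0.withDensity h1 := rfl
  have hμ2 : gibbs ρ0 L ys2 W = ρ0.withDensity h2 := rfl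
  haveI hP1 : IsProbabilityMeasure (gibbs ρ0 L ys1 W) := gibbs_isProbability ρ0 hm hnn ys1 hW.le
  haveI hP2 : IsProbabilityMeasure (gibbs ρ0 L ys2 W) := gibbs_isProbability ρ0 hm hnn ys2 hW.le
  set k : Par p → ℝ≥0∞ := fun θ => ENNReal.ofReal ((g1 θ / Z1) / (g2 θ / Z2)) with hkdef
  have hkm : Measurable k :=
    ENNReal.measurable_ofReal.comp ((hg1m.div_const _).div (hg2m.div_const _))
  have hfac : gibbs ρ0 L ys1 W = (gibbs ρ0 L ys2 W).withDensity k := by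
    rw [hμ1, hμ2, ← withDensity_mul ρ0 hh2m hkm]
    congr 1
    funext θ
    have hgz : 0 < g2 θ / Z2 := div_pos (hg2pos θ) hZ2pos
    show ENNReal.ofReal (g1 θ / Z1) = (h2 * k) θ
    rw [Pi.mul_apply]
    simp only [hh2def, hkdef]
    rw [← ENNReal.ofReal_mul hgz.le, mul_comm (g2 θ / Z2), div_mul_cancel₀ _ hgz.ne']
  have hac : gibbs ρ0 L ys1 W ≪ gibbs ρ0 L ys2 W := by
    rw [hfac]; exact withDensity_absolutelyContinuous _ k
  have hrn2 : (gibbs ρ0 L ys1 W).rnDeriv (gibbs ρ0 L ys2 W) =ᵐ[gibbs ρ0 L ys2 W] k := by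
    conv_lhs => rw [hfac]
    exact Measure.rnDeriv_withDensity _ hkm
  have hrn1 : (gibbs ρ0 L ys1 W).rnDeriv (gibbs ρ0 L ys2 W) =ᵐ[gibbs ρ0 L ys1 W] k :=
    hac.ae_eq hrn2
  set c := Real.log Z2 - Real.log Z1 with hcdef
  set ξ : Par p → ℝ := fun θ => (n * W) * empRisk L ys2 θ - (n * W) * empRisk L ys1 θ with hξdef
  have hξm : Measurable ξ := (hR2m.const_mul _).sub (hR1m.const_mul _)
  have hξbound : ∀ θ, |ξ θ| ≤ W * S * C2 θ := by
    intro θ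
    have e1 := n_mul_empRisk (L := L) ys1 θ
    have e2 := n_mul_empRisk (L := L) ys2 θ
    have h : ξ θ = W * ((n:ℝ) * empRisk L ys2 θ - (n:ℝ) * empRisk L ys1 θ) := by
      simp only [hξdef]; ring
    rw [h, abs_mul, abs_of_pos hW, e1, e2, abs_sub_comm]
    calc W * |(∑ i, L θ (ys1 i)) - ∑ i, L θ (ys2 i)| ≤ W * (C2 θ * S) :=
          mul_le_mul_of_nonneg_left (hdiff θ) hW.le
      _ = W * S * C2 θ := by ring
  have hlog : (fun θ => Real.log ((gibbs ρ0 L ys1 W).rnDeriv (gibbs ρ0 L ys2 W) θ).toReal)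
      =ᵐ[gibbs ρ0 L ys1 W] fun θ => ξ θ + c := by
    filter_upwards [hrn1] with θ hθ
    have hgz1 : 0 < g1 θ / Z1 := div_pos (hg1pos θ) hZ1pos
    have hgz2 : 0 < g2 θ / Z2 := div_pos (hg2pos θ) hZ2pos
    rw [hθ]
    simp only [hkdef]
    rw [ENNReal.toReal_ofReal (div_pos hgz1 hgz2).le,
        Real.log_div hgz1.ne' hgz2.ne',
        Real.log_div (hg1pos θ).ne' hZ1pos.ne',
        Real.log_div (hg2pos θ).ne' hZ2pos.ne']
    simp only [hg1def, hg2def, Real.log_exp, hξdef, hcdef]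
    ring
  have hle1 : gibbs ρ0 L ys1 W ≤ (ENNReal.ofReal Z1⁻¹) • ρ0 := by
    rw [hμ1, ← withDensity_const]
    refine withDensity_mono (ae_of_all _ fun θ => ?_)
    simp only [hh1def]
    refine ENNReal.ofReal_le_ofReal ?_
    calc g1 θ / Z1 ≤ 1 / Z1 := (div_le_div_iff_of_pos_right hZ1pos).mpr (hg1le θ)
      _ = Z1⁻¹ := one_div Z1
  have hC2μ1 : Integrable C2 (gibbs ρ0 L ys1 W) :=
    (hC2int.smul_measure ENNReal.ofReal_ne_top).mono_measure hle1
  have hξint : Integrable ξ (gibbs ρ0 L ys1 W) := by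
    refine Integrable.mono' (hC2μ1.const_mul (W * S)) hξm.aestronglyMeasurable
      (ae_of_all _ fun θ => ?_)
    rw [Real.norm_eq_abs]
    exact hξbound θ
  have hφint : Integrable (fun θ => ξ θ + c) (gibbs ρ0 L ys1 W) := hξint.add (integrable_const c)
  have hint : Integrable (fun θ =>
      Real.log ((gibbs ρ0 L ys1 W).rnDeriv (gibbs ρ0 L ys2 W) θ).toReal) (gibbs ρ0 L ys1 W) :=
    hφint.congr hlog.symm
  have hkl : klDiv (gibbs ρ0 L ys1 W) (gibbs ρ0 L ys2 W)
      = ((∫ θ, Real.log ((gibbs ρ0 L ys1 W).rnDeriv (gibbs ρ0 L ys2 W) θ).toReal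
          ∂(gibbs ρ0 L ys1 W) : ℝ) : EReal) := by
    unfold klDiv
    exact if_pos ⟨hac, hint⟩
  rw [hkl, integral_congr_ae hlog, integral_add hξint (integrable_const c), integral_const,
    probReal_univ, one_smul]
  refine EReal.coe_le_coe_iff.mpr ?_
  have hZ1inv : Z1⁻¹ ≤ δ⁻¹ * E := by
    have h0 : 0 < δ * E⁻¹ := by positivity
    calc Z1⁻¹ ≤ (δ * E⁻¹)⁻¹ := inv_anti₀ h0 hZ1
      _ = δ⁻¹ * E := by rw [mul_inv, inv_inv]
  have hintC2 : ∫ θ, C2 θ ∂(gibbs ρ0 L ys1 W) ≤ Z1⁻¹ * J := by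
    calc ∫ θ, C2 θ ∂(gibbs ρ0 L ys1 W)
        ≤ ∫ θ, C2 θ ∂((ENNReal.ofReal Z1⁻¹) • ρ0) :=
          integral_mono_measure hle1 (ae_of_all _ hC2nn)
            (hC2int.smul_measure ENNReal.ofReal_ne_top)
      _ = Z1⁻¹ * J := by
          rw [integral_smul_measure, ENNReal.toReal_ofReal (inv_nonneg.mpr hZ1pos.le),
            smul_eq_mul, ← hJdef]
  have hξle : ∫ θ, ξ θ ∂(gibbs ρ0 L ys1 W) ≤ W * S * (Z1⁻¹ * J) := by
    calc ∫ θ, ξ θ ∂(gibbs ρ0 L ys1 W)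
        ≤ ∫ θ, W * S * C2 θ ∂(gibbs ρ0 L ys1 W) :=
          integral_mono hξint (hC2μ1.const_mul _) fun θ => (le_abs_self _).trans (hξbound θ)
      _ = W * S * ∫ θ, C2 θ ∂(gibbs ρ0 L ys1 W) := integral_const_mul _ _
      _ ≤ W * S * (Z1⁻¹ * J) := mul_le_mul_of_nonneg_left hintC2 (by positivity)
  have hZd : |Z2 - Z1| ≤ W * S * J := by
    have e1 : (∫ θ, g1 θ ∂ρ0) = Z1 := rfl
    have e2 : (∫ θ, g2 θ ∂ρ0) = Z2 := rfl
    have hsub : Z2 - Z1 = ∫ θ, (g2 θ - g1 θ) ∂ρ0 := by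
      rw [integral_sub hg2int hg1int, e1, e2]
    rw [hsub]
    calc |∫ θ, (g2 θ - g1 θ) ∂ρ0| ≤ ∫ θ, |g2 θ - g1 θ| ∂ρ0 := by
          simpa [Real.norm_eq_abs] using
            norm_integral_le_integral_norm (μ := ρ0) (fun θ => g2 θ - g1 θ)
      _ ≤ ∫ θ, W * S * C2 θ ∂ρ0 := by
          refine integral_mono (hg2int.sub hg1int).abs (hC2int.const_mul _) fun θ => ?_
          simp only [hg1def, hg2def]
          rw [neg_mul, neg_mul]
          refine (abs_exp_neg_sub _ _ (mul_nonneg hnW (empRisk_nonneg hnn ys2 θ))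
            (mul_nonneg hnW (empRisk_nonneg hnn ys1 θ))).trans ?_
          have hb := hξbound θ
          simp only [hξdef] at hb
          exact hb
      _ = W * S * J := by rw [integral_const_mul, ← hJdef]
  have hclog : c ≤ W * S * J * Z1⁻¹ := by
    rw [hcdef, ← Real.log_div hZ2pos.ne' hZ1pos.ne']
    calc Real.log (Z2 / Z1) ≤ Z2 / Z1 - 1 := Real.log_le_sub_one_of_pos (div_pos hZ2pos hZ1pos)
      _ = (Z2 - Z1) / Z1 := by field_simp
      _ ≤ |Z2 - Z1| / Z1 := (div_le_div_iff_of_pos_right hZ1pos).mpr (le_abs_self _)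
      _ ≤ (W * S * J) / Z1 := (div_le_div_iff_of_pos_right hZ1pos).mpr hZd
      _ = W * S * J * Z1⁻¹ := div_eq_mul_inv _ _
  have h1 : ∫ θ, ξ θ ∂(gibbs ρ0 L ys1 W) + c ≤ W * S * (Z1⁻¹ * J) + W * S * J * Z1⁻¹ :=
    add_le_add hξle hclog
  have h2 : W * S * (Z1⁻¹ * J) + W * S * J * Z1⁻¹ = 2 * J * Z1⁻¹ * (W * S) := by ring
  have h3 : 2 * J * Z1⁻¹ * (W * S) ≤ 2 * J * (δ⁻¹ * E) * (W * S) := by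
    have h2J : (0:ℝ) ≤ 2 * J := by linarith
    have hWS : (0:ℝ) ≤ W * S := by positivity
    exact mul_le_mul_of_nonneg_right (mul_le_mul_of_nonneg_left hZ1inv h2J) hWS
  have h4 : 2 * J * (δ⁻¹ * E) * (W * S) = 2 * J / δ * E * W * S := by ring
  linarith

end KeyLemma


/-- Theorem 1, KL part: stability of Gibbs posteriors in the data.
There are constants `a, b > 0`, depending only on the prior (and loss) and on `r`, such that
for all sample sizes, all `W > 0` and all pairs of datasets bounded in norm by `r`,
`max(D_KL(ρ̂₁‖ρ̂₂), D_KL(ρ̂₂‖ρ̂₁)) ≤ a W (1 + e^{bnW})² ∑ᵢ ‖y_{1,i} − y_{2,i}‖`. -/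
theorem gibbs_stability_kl
    {p d : ℕ}
    (ρ0 : Measure (Par p)) (P : Measure (Obs d))
    [IsProbabilityMeasure ρ0] [IsProbabilityMeasure P]
    (L : Par p → Obs d → ℝ) (f : Par p → ℝ)
    (hL : Assumption1 ρ0 P L) (hprior : Assumption2 ρ0 f)
    (r : ℝ) (hr : 0 < r) :
    ∃ a > (0 : ℝ), ∃ b > (0 : ℝ),
      ∀ (n : ℕ) (W : ℝ), 0 < W →
        ∀ ys1 ys2 : Fin n → Obs d,
          (∀ i, ‖ys1 i‖ < r) → (∀ i, ‖ys2 i‖ < r) →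
          max (klDiv (gibbs ρ0 L ys1 W) (gibbs ρ0 L ys2 W))
              (klDiv (gibbs ρ0 L ys2 W) (gibbs ρ0 L ys1 W))
            ≤ ((a * W * (1 + Real.exp (b * n * W)) ^ 2 * ∑ i, ‖ys1 i - ys2 i‖ : ℝ) : EReal) := by
  obtain ⟨C2, hC2nn, hC2eint, hC2lip⟩ := hL.lipschitz_data r hr
  have hm := hL.measurable
  have hnn := hL.nonneg
  have hC2ae : AEMeasurable C2 ρ0 := by
    have h1 : AEMeasurable (fun θ => Real.exp (C2 θ)) ρ0 := hC2eint.aemeasurable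
    have h2 := Real.measurable_log.comp_aemeasurable h1
    have h3 : (Real.log ∘ fun θ => Real.exp (C2 θ)) = C2 := by
      funext θ; simp [Function.comp, Real.log_exp]
    rwa [h3] at h2
  have hC2int : Integrable C2 ρ0 := by
    refine hC2eint.mono' hC2ae.aestronglyMeasurable (ae_of_all _ fun θ => ?_)
    rw [Real.norm_eq_abs, abs_of_nonneg (hC2nn θ)]
    linarith [Real.add_one_le_exp (C2 θ)]
  set C2' := hC2ae.mk C2 with hC2'def
  have hC2'm : Measurable C2' := hC2ae.measurable_mk
  have hC2'ae : C2 =ᵐ[ρ0] C2' := hC2ae.ae_eq_mk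
  set ψ : Par p → ℝ := fun θ => L θ 0 + r * max (C2' θ) 0 with hψdef
  have hψm : Measurable ψ :=
    (measurable_L_slice hm 0).add ((hC2'm.max measurable_const).const_mul r)
  have hex : ∃ kM : ℕ, ρ0 {θ | ψ θ ≤ (kM : ℝ)} ≠ 0 := by
    by_contra hcon
    push_neg at hcon
    have hun : (⋃ kM : ℕ, {θ | ψ θ ≤ (kM : ℝ)}) = Set.univ := by
      ext θ
      simp only [Set.mem_iUnion, Set.mem_setOf_eq, Set.mem_univ, iff_true]
      exact exists_nat_ge (ψ θ)
    have hz := measure_iUnion_null (μ := ρ0) hcon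
    rw [hun, measure_univ] at hz
    exact one_ne_zero hz
  obtain ⟨kM, hkM⟩ := hex
  set M : ℝ := (kM : ℝ) with hMdef
  have hM0 : (0:ℝ) ≤ M := Nat.cast_nonneg kM
  set A := {θ | ψ θ ≤ M} with hAdef
  have hAm : MeasurableSet A := measurableSet_le hψm measurable_const
  set δ := (ρ0 A).toReal with hδdef
  have hδ : 0 < δ := ENNReal.toReal_pos hkM (measure_ne_top _ _)
  set J := ∫ θ, C2 θ ∂ρ0 with hJdef
  have hJ : 0 ≤ J := integral_nonneg hC2nn
  refine ⟨2 * J / δ + 1, by positivity, M + 1, by positivity, ?_⟩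
  intro n W hW ys1 ys2 hys1 hys2
  have hnW : (0:ℝ) ≤ (n:ℝ) * W := by positivity
  have hZlow : ∀ ys : Fin n → Obs d, (∀ i, ‖ys i‖ < r) →
      δ * (Real.exp (M * ((n:ℝ) * W)))⁻¹ ≤ partition ρ0 L ys W := by
    intro ys hys
    have hRle : ∀ᵐ θ ∂ρ0, θ ∈ A → empRisk L ys θ ≤ M := by
      filter_upwards [hC2'ae] with θ hθ hAmem
      have hterm : ∀ i : Fin n, L θ (ys i) ≤ L θ 0 + C2 θ * r := by
        intro i
        have h0 : ‖(0 : Obs d)‖ < r := by simpa using hr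
        have h1 := hC2lip θ (ys i) 0 (hys i) h0
        rw [sub_zero] at h1
        have h2 := (abs_le.mp h1).2
        have h3 : C2 θ * ‖ys i‖ ≤ C2 θ * r :=
          mul_le_mul_of_nonneg_left (hys i).le (hC2nn θ)
        linarith
      have hψA : L θ 0 + C2 θ * r ≤ M := by
        have hmax : max (C2' θ) 0 = C2 θ := by rw [← hθ, max_eq_left (hC2nn θ)]
        have hA' : ψ θ ≤ M := hAmem
        simp only [hψdef] at hA'
        rw [hmax] at hA'
        have := mul_comm r (C2 θ)
        linarith
      have hnonneg : 0 ≤ L θ 0 + C2 θ * r := add_nonneg (hnn θ 0) (mul_nonneg (hC2nn θ) hr.le)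
      have hsum : (∑ i, L θ (ys i)) ≤ (n:ℝ) * (L θ 0 + C2 θ * r) := by
        calc (∑ i, L θ (ys i)) ≤ ∑ _i : Fin n, (L θ 0 + C2 θ * r) :=
              Finset.sum_le_sum fun i _ => hterm i
          _ = (n:ℝ) * (L θ 0 + C2 θ * r) := by
              rw [Finset.sum_const, Finset.card_univ, Fintype.card_fin, nsmul_eq_mul]
      have hemp : empRisk L ys θ ≤ L θ 0 + C2 θ * r := by
        rcases Nat.eq_zero_or_pos n with hn | hn
        · have hz : empRisk L ys θ = 0 := by
            unfold empRisk
            subst hn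
            simp
          rw [hz]; exact hnonneg
        · have hn' : (0:ℝ) < n := by exact_mod_cast hn
          have he : empRisk L ys θ = (1/(n:ℝ)) * ∑ i, L θ (ys i) := rfl
          rw [he]
          calc (1/(n:ℝ)) * ∑ i, L θ (ys i)
              ≤ (1/(n:ℝ)) * ((n:ℝ) * (L θ 0 + C2 θ * r)) :=
                mul_le_mul_of_nonneg_left hsum (by positivity)
            _ = L θ 0 + C2 θ * r := by field_simp
      linarith
    have hind : Integrable (A.indicator fun _ => Real.exp (-((n:ℝ) * W) * M)) ρ0 :=
      (integrable_const _).indicator hAm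
    have hmono : ∀ᵐ θ ∂ρ0,
        A.indicator (fun _ => Real.exp (-((n:ℝ) * W) * M)) θ
          ≤ Real.exp (-((n:ℝ) * W) * empRisk L ys θ) := by
      filter_upwards [hRle] with θ hθ
      by_cases hAmem : θ ∈ A
      · rw [Set.indicator_of_mem hAmem]
        refine Real.exp_le_exp.mpr ?_
        nlinarith [mul_nonneg hnW (sub_nonneg.mpr (hθ hAmem))]
      · rw [Set.indicator_of_notMem hAmem]
        exact (Real.exp_pos _).le
    calc δ * (Real.exp (M * ((n:ℝ) * W)))⁻¹
        = ∫ θ, A.indicator (fun _ => Real.exp (-((n:ℝ) * W) * M)) θ ∂ρ0 := by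
          rw [integral_indicator hAm, setIntegral_const, smul_eq_mul, measureReal_def, ← hδdef,
            ← Real.exp_neg]
          have harg : -(M * ((n:ℝ) * W)) = -((n:ℝ) * W) * M := by ring
          rw [harg]
      _ ≤ ∫ θ, Real.exp (-((n:ℝ) * W) * empRisk L ys θ) ∂ρ0 :=
          integral_mono_ae hind (integrable_expRisk ρ0 hm hnn ys hW.le) hmono
      _ = partition ρ0 L ys W := rfl
  have hS2 : (∑ i, ‖ys2 i - ys1 i‖) = ∑ i, ‖ys1 i - ys2 i‖ :=
    Finset.sum_congr rfl fun i _ => norm_sub_rev _ _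
  have hdiff12 : ∀ θ, |(∑ i, L θ (ys1 i)) - ∑ i, L θ (ys2 i)|
      ≤ C2 θ * ∑ i, ‖ys1 i - ys2 i‖ := by
    intro θ
    calc |(∑ i, L θ (ys1 i)) - ∑ i, L θ (ys2 i)|
        = |∑ i, (L θ (ys1 i) - L θ (ys2 i))| := by rw [Finset.sum_sub_distrib]
      _ ≤ ∑ i, |L θ (ys1 i) - L θ (ys2 i)| := Finset.abs_sum_le_sum_abs _ _
      _ ≤ ∑ i, C2 θ * ‖ys1 i - ys2 i‖ :=
          Finset.sum_le_sum fun i _ => hC2lip θ (ys1 i) (ys2 i) (hys1 i) (hys2 i)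
      _ = C2 θ * ∑ i, ‖ys1 i - ys2 i‖ := by rw [Finset.mul_sum]
  have hdiff21 : ∀ θ, |(∑ i, L θ (ys2 i)) - ∑ i, L θ (ys1 i)|
      ≤ C2 θ * ∑ i, ‖ys2 i - ys1 i‖ := by
    intro θ
    rw [abs_sub_comm, hS2]
    exact hdiff12 θ
  have hE1 : (1:ℝ) ≤ Real.exp (M * ((n:ℝ) * W)) := by
    rw [← Real.exp_zero]
    exact Real.exp_le_exp.mpr (by positivity)
  have hkey1 := kl_one_sided ρ0 hm hnn hC2nn hC2int hW ys1 ys2 hdiff12 hδ hE1 (hZlow ys1 hys1)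
  have hkey2 := kl_one_sided ρ0 hm hnn hC2nn hC2int hW ys2 ys1 hdiff21 hδ hE1 (hZlow ys2 hys2)
  rw [hS2] at hkey2
  set S := ∑ i, ‖ys1 i - ys2 i‖ with hSdef
  have hS : 0 ≤ S := Finset.sum_nonneg fun i _ => norm_nonneg _
  have hcomp : 2 * J / δ * Real.exp (M * ((n:ℝ) * W)) * W * S
      ≤ (2 * J / δ + 1) * W * (1 + Real.exp ((M + 1) * (n:ℝ) * W)) ^ 2 * S := by
    have hexp1 : Real.exp (M * ((n:ℝ) * W)) ≤ Real.exp ((M + 1) * (n:ℝ) * W) :=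
      Real.exp_le_exp.mpr (by nlinarith)
    have hexp2 : Real.exp ((M + 1) * (n:ℝ) * W) ≤ (1 + Real.exp ((M + 1) * (n:ℝ) * W)) ^ 2 := by
      nlinarith [Real.exp_pos ((M + 1) * (n:ℝ) * W)]
    have hstep : 2 * J / δ * Real.exp (M * ((n:ℝ) * W)) * W * S
        ≤ (2 * J / δ + 1) * ((1 + Real.exp ((M + 1) * (n:ℝ) * W)) ^ 2) * W * S := by
      refine mul_le_mul_of_nonneg_right (mul_le_mul_of_nonneg_right ?_ hW.le) hS
      exact mul_le_mul (by linarith [div_nonneg (by linarith : (0:ℝ) ≤ 2 * J) hδ.le])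
        (hexp1.trans hexp2) (Real.exp_pos _).le (by positivity)
    have heq : (2 * J / δ + 1) * ((1 + Real.exp ((M + 1) * (n:ℝ) * W)) ^ 2) * W * S
        = (2 * J / δ + 1) * W * (1 + Real.exp ((M + 1) * (n:ℝ) * W)) ^ 2 * S := by ring
    linarith
  refine max_le ?_ ?_
  · exact hkey1.trans (EReal.coe_le_coe_iff.mpr hcomp)
  · exact hkey2.trans (EReal.coe_le_coe_iff.mpr hcomp)


end
end

section
/- (Theorem 1, Hellinger part.) Let r > 0, W > 0, and let (y_{1,1},…,y_{1,n}) and (y_{2,1},…,y_{2,n}) be two datasets in Y^n with max_i ‖y_{1,i}‖ < r and max_i ‖y_{2,i}‖ < r. Under Assumptions 1–2, there exist constants a, b > 0 depending only on the prior ρ0 and on r such that the Gibbs posteriors ρ̂_{n,1}^W and ρ̂_{n,2}^W built from the two datasets satisfy d_H²(ρ̂_{n,1}^W, ρ̂_{n,2}^W) ≤ sqrt( 1 − exp{ −a W (1 + e^{bnW})² ∑_{i=1}^n ‖y_{1,i} − y_{2,i}‖ } ). -/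
set_option maxHeartbeats 4000000

open MeasureTheory Real Filter Topology
open scoped ENNReal NNReal

noncomputable section

lemma hellingerSq_withDensity_eq {α : Type*} [MeasurableSpace α] (ρ0 : Measure α)
    [IsProbabilityMeasure ρ0] {g1 g2 : α → ℝ}
    (hm1 : Measurable g1) (hm2 : Measurable g2)
    (hp1 : ∀ x, 0 < g1 x) (hp2 : ∀ x, 0 < g2 x)
    (hi1 : Integrable g1 ρ0) (hi2 : Integrable g2 ρ0)
    (h1 : ∫ x, g1 x ∂ρ0 = 1) (h2 : ∫ x, g2 x ∂ρ0 = 1) :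
    hellingerSq (ρ0.withDensity fun x => ENNReal.ofReal (g1 x))
      (ρ0.withDensity fun x => ENNReal.ofReal (g2 x))
      = 1 - ∫ x, Real.sqrt (g1 x * g2 x) ∂ρ0 := by
  set G1 : α → ℝ≥0∞ := fun x => ENNReal.ofReal (g1 x) with hG1
  set G2 : α → ℝ≥0∞ := fun x => ENNReal.ofReal (g2 x) with hG2
  have hG1m : Measurable G1 := hm1.ennreal_ofReal
  have hG2m : Measurable G2 := hm2.ennreal_ofReal
  set μ1 := ρ0.withDensity G1 with hμ1def
  set μ2 := ρ0.withDensity G2 with hμ2def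
  have hν : μ1 + μ2 = ρ0.withDensity (fun x => G1 x + G2 x) := (withDensity_add_left hG1m G2).symm
  have hμuniv : ∀ (g : α → ℝ), Measurable g → Integrable g ρ0 → (∀ x, 0 < g x) →
      (∫ x, g x ∂ρ0 = 1) →
      ρ0.withDensity (fun x => ENNReal.ofReal (g x)) Set.univ = 1 := by
    intro g hgm hgi hgp hg1
    rw [withDensity_apply _ MeasurableSet.univ, Measure.restrict_univ,
      ← ofReal_integral_eq_lintegral_ofReal hgi (Eventually.of_forall fun x => (hgp x).le), hg1,
      ENNReal.ofReal_one]
  have hμ1P : IsProbabilityMeasure μ1 := ⟨hμuniv g1 hm1 hi1 hp1 h1⟩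
  have hμ2P : IsProbabilityMeasure μ2 := ⟨hμuniv g2 hm2 hi2 hp2 h2⟩
  have hsum_ne : ∀ x, G1 x + G2 x ≠ 0 := by
    intro x h
    rw [add_eq_zero] at h
    have := h.1
    rw [hG1] at this
    simp only [ENNReal.ofReal_eq_zero] at this
    exact absurd this (not_le.mpr (hp1 x))
  have hsum_top : ∀ x, G1 x + G2 x ≠ ⊤ := fun x => by
    simp [hG1, hG2, ENNReal.add_eq_top]
  set F1 : α → ℝ≥0∞ := fun x => G1 x / (G1 x + G2 x) with hF1
  set F2 : α → ℝ≥0∞ := fun x => G2 x / (G1 x + G2 x) with hF2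
  have hF1m : Measurable F1 := hG1m.div (hG1m.add hG2m)
  have hF2m : Measurable F2 := hG2m.div (hG1m.add hG2m)
  have key : ∀ (G F : α → ℝ≥0∞), Measurable F → (∀ x, (G1 x + G2 x) * F x = G x) →
      (μ1 + μ2).withDensity F = ρ0.withDensity G := by
    intro G F hFm hGF
    rw [hν, ← withDensity_mul _ (f := fun x => G1 x + G2 x) (hG1m.add hG2m) hFm]
    congr 1
    funext x
    exact hGF x
  have key1 : (μ1 + μ2).withDensity F1 = μ1 :=
    key G1 F1 hF1m fun x => ENNReal.mul_div_cancel (hsum_ne x) (hsum_top x)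
  have key2 : (μ1 + μ2).withDensity F2 = μ2 :=
    key G2 F2 hF2m fun x => ENNReal.mul_div_cancel (hsum_ne x) (hsum_top x)
  have hrn1 : μ1.rnDeriv (μ1 + μ2) =ᵐ[μ1 + μ2] F1 := by
    have h := Measure.rnDeriv_withDensity (μ1 + μ2) hF1m
    rwa [key1] at h
  have hrn2 : μ2.rnDeriv (μ1 + μ2) =ᵐ[μ1 + μ2] F2 := by
    have h := Measure.rnDeriv_withDensity (μ1 + μ2) hF2m
    rwa [key2] at h
  rw [hellingerSq]
  have hstep : ∫ x, (Real.sqrt ((μ1.rnDeriv (μ1 + μ2) x).toReal)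
      - Real.sqrt ((μ2.rnDeriv (μ1 + μ2) x).toReal)) ^ 2 ∂(μ1 + μ2)
      = ∫ x, (Real.sqrt ((F1 x).toReal) - Real.sqrt ((F2 x).toReal)) ^ 2 ∂(μ1 + μ2) := by
    apply integral_congr_ae
    filter_upwards [hrn1, hrn2] with x hx1 hx2
    rw [hx1, hx2]
  rw [hstep]
  set w : α → ℝ≥0 := fun x => (g1 x + g2 x).toNNReal with hw
  have hwm : Measurable w := (hm1.add hm2).real_toNNReal
  have hwd : (fun x => G1 x + G2 x) = fun x => ((w x : ℝ≥0) : ℝ≥0∞) := by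
    funext x
    rw [hw]
    simp only [hG1, hG2]
    rw [← ENNReal.ofReal_add (hp1 x).le (hp2 x).le]
    rfl
  rw [hν, hwd, integral_withDensity_eq_integral_smul hwm]
  have hpt : ∀ x, w x • (Real.sqrt ((F1 x).toReal) - Real.sqrt ((F2 x).toReal)) ^ 2
      = g1 x + g2 x - 2 * Real.sqrt (g1 x * g2 x) := by
    intro x
    have hs : 0 < g1 x + g2 x := add_pos (hp1 x) (hp2 x)
    have hws : ((w x : ℝ≥0) : ℝ) = g1 x + g2 x := Real.coe_toNNReal _ hs.le
    have hFv : ∀ (g : α → ℝ) (G : α → ℝ≥0∞), (0 < g x) → (G x = ENNReal.ofReal (g x)) →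
        ((G x / (G1 x + G2 x)).toReal) = g x / (g1 x + g2 x) := by
      intro g G hg hGx
      rw [hGx, ENNReal.toReal_div, ENNReal.toReal_ofReal hg.le]
      congr 1
      rw [← ENNReal.ofReal_add (hp1 x).le (hp2 x).le, ENNReal.toReal_ofReal hs.le]
    have h1v : (F1 x).toReal = g1 x / (g1 x + g2 x) := hFv g1 G1 (hp1 x) rfl
    have h2v : (F2 x).toReal = g2 x / (g1 x + g2 x) := hFv g2 G2 (hp2 x) rfl
    rw [NNReal.smul_def, smul_eq_mul, hws, hF1, hF2, h1v, h2v,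
      Real.sqrt_div (hp1 x).le, Real.sqrt_div (hp2 x).le, div_sub_div_same, div_pow,
      Real.sq_sqrt hs.le, mul_div_cancel₀ _ hs.ne', sub_sq,
      Real.sq_sqrt (hp1 x).le, Real.sq_sqrt (hp2 x).le, Real.sqrt_mul (hp1 x).le]
    ring
  rw [integral_congr_ae (Eventually.of_forall hpt)]
  have hsm : Measurable fun x => Real.sqrt (g1 x * g2 x) := (hm1.mul hm2).sqrt
  have hI : Integrable (fun x => g1 x + g2 x) ρ0 := hi1.add hi2
  have hsi : Integrable (fun x => Real.sqrt (g1 x * g2 x)) ρ0 := by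
    refine hI.mono hsm.aestronglyMeasurable (Eventually.of_forall fun x => ?_)
    simp only [Real.norm_eq_abs]
    rw [abs_of_nonneg (Real.sqrt_nonneg _),
      abs_of_nonneg (add_pos (hp1 x) (hp2 x)).le]
    calc Real.sqrt (g1 x * g2 x) ≤ (g1 x + g2 x) / 2 := by
          rw [← Real.sqrt_mul_self (by linarith [(hp1 x), (hp2 x)] : (0:ℝ) ≤ (g1 x + g2 x)/2)]
          apply Real.sqrt_le_sqrt
          nlinarith [sq_nonneg (g1 x - g2 x)]
      _ ≤ g1 x + g2 x := by linarith [(hp1 x).le, (hp2 x).le]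
  rw [integral_sub hI (hsi.const_mul 2), integral_add hi1 hi2, h1, h2,
    integral_const_mul]
  ring

lemma exp_neg_sub_exp_neg_le (u v : ℝ) (hu : 0 ≤ u) (hv : 0 ≤ v) :
    Real.exp (-u) - Real.exp (-v) ≤ |u - v| := by
  rcases le_total u v with huv | huv
  · have h1 : (u - v) + 1 ≤ Real.exp (u - v) := by
      have := Real.add_one_le_exp (u - v)
      linarith
    have h2 : Real.exp (-v) = Real.exp (-u) * Real.exp (u - v) := by
      rw [← Real.exp_add]
      congr 1
      ring
    have h3 : Real.exp (-u) ≤ 1 := Real.exp_le_one_iff.mpr (by linarith)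
    rw [abs_of_nonpos (by linarith)]
    nlinarith [Real.exp_pos (-u)]
  · have h1 : Real.exp (-u) ≤ Real.exp (-v) := Real.exp_le_exp.mpr (by linarith)
    have h2 : Real.exp (-u) - Real.exp (-v) ≤ 0 := by linarith
    exact h2.trans (abs_nonneg _)

lemma bhatta_jensen {α : Type*} [MeasurableSpace α] (μ : Measure α) [IsProbabilityMeasure μ]
    (e1 e2 C2 l1 l2 : α → ℝ) (W S Z1 Z2 Cb : ℝ)
    (hW : 0 < W) (hS0 : 0 ≤ S)
    (he1eq : ∀ θ, e1 θ = Real.exp (-W * l1 θ)) (he2eq : ∀ θ, e2 θ = Real.exp (-W * l2 θ))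
    (hl1m : Measurable l1) (hl2m : Measurable l2)
    (hl1nn : ∀ θ, 0 ≤ l1 θ) (hl2nn : ∀ θ, 0 ≤ l2 θ)
    (hC2nn : ∀ θ, 0 ≤ C2 θ) (hC2integrable : Integrable C2 μ) (hCbdef : Cb = ∫ θ, C2 θ ∂μ)
    (hldiff : ∀ θ, |l1 θ - l2 θ| ≤ C2 θ * S)
    (he1int : Integrable e1 μ) (he2int : Integrable e2 μ)
    (hZ1eq : Z1 = ∫ θ, e1 θ ∂μ) (hZ2eq : Z2 = ∫ θ, e2 θ ∂μ)
    (hZ1pos : 0 < Z1) (hZ2pos : 0 < Z2) :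
    Real.exp (-(W * S / Z1 * Cb)) ≤ ∫ θ, Real.sqrt (e1 θ / Z1 * (e2 θ / Z2)) ∂μ := by
  set ρ0 := μ with hρ0def
  have he1m : Measurable e1 := by
    have : e1 = fun θ => Real.exp (-W * l1 θ) := funext he1eq
    rw [this]
    exact (hl1m.const_mul (-W)).exp
  have he2m : Measurable e2 := by
    have : e2 = fun θ => Real.exp (-W * l2 θ) := funext he2eq
    rw [this]
    exact (hl2m.const_mul (-W)).exp
  have he1pos : ∀ θ, 0 < e1 θ := fun θ => (he1eq θ) ▸ Real.exp_pos _
  have he2pos : ∀ θ, 0 < e2 θ := fun θ => (he2eq θ) ▸ Real.exp_pos _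
  have he1le1 : ∀ θ, e1 θ ≤ 1 := fun θ => by
    rw [he1eq θ]
    exact Real.exp_le_one_iff.mpr (by nlinarith [hl1nn θ])
  set g1 : α → ℝ := fun θ => e1 θ / Z1 with hg1def
  set g2 : α → ℝ := fun θ => e2 θ / Z2 with hg2def
  have hg1m : Measurable g1 := he1m.div_const _
  have hg2m : Measurable g2 := he2m.div_const _
  have hg1pos : ∀ θ, 0 < g1 θ := fun θ => div_pos (he1pos θ) hZ1pos
  have hg2pos : ∀ θ, 0 < g2 θ := fun θ => div_pos (he2pos θ) hZ2pos
  have hg1int : Integrable g1 ρ0 := he1int.div_const _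
  have hg2int : Integrable g2 ρ0 := he2int.div_const _
  have hg1one : ∫ θ, g1 θ ∂ρ0 = 1 := by
    rw [hg1def]
    simp only
    rw [integral_div, ← hZ1eq, div_self hZ1pos.ne']
  have hg1le : ∀ θ, g1 θ ≤ 1 / Z1 := fun θ => by
    rw [hg1def]
    simp only
    gcongr
    exact he1le1 θ
  -- Jensen / tangent-line lower bound on the Bhattacharyya coefficient
  set c0 : ℝ := (Real.log Z1 - Real.log Z2) / 2 with hc0def
  set h : α → ℝ := fun θ => W * (l1 θ - l2 θ) / 2 + c0 with hhdef
  have hpt : ∀ θ, Real.sqrt (g1 θ * g2 θ) = Real.exp (h θ) * g1 θ := by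
    intro θ
    have hg1e : g1 θ = Real.exp (-W * l1 θ - Real.log Z1) := by
      rw [hg1def]
      simp only
      rw [he1eq θ, Real.exp_sub, Real.exp_log hZ1pos]
    have hg2e : g2 θ = Real.exp (-W * l2 θ - Real.log Z2) := by
      rw [hg2def]
      simp only
      rw [he2eq θ, Real.exp_sub, Real.exp_log hZ2pos]
    rw [hg1e, hg2e, ← Real.exp_add, ← Real.exp_add, ← Real.exp_half]
    congr 1
    rw [hhdef, hc0def]
    simp only
    ring
  have hterm1int : Integrable (fun θ => W * (l1 θ - l2 θ) / 2 * g1 θ) ρ0 := by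
    refine (hC2integrable.const_mul (W * S / (2 * Z1))).mono'
      ((((hl1m.sub hl2m).const_mul W).div_const 2).mul hg1m).aestronglyMeasurable
      (Eventually.of_forall fun θ => ?_)
    rw [Real.norm_eq_abs, abs_mul]
    have ha : |W * (l1 θ - l2 θ) / 2| ≤ W * (C2 θ * S) / 2 := by
      rw [abs_div, abs_mul, abs_of_pos hW, abs_two]
      gcongr
      exact hldiff θ
    have hb : |g1 θ| ≤ 1 / Z1 := by
      rw [abs_of_pos (hg1pos θ)]
      exact hg1le θ
    have hcoef : 0 ≤ W * (C2 θ * S) / 2 :=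
      div_nonneg (mul_nonneg hW.le (mul_nonneg (hC2nn θ) hS0)) two_pos.le
    calc |W * (l1 θ - l2 θ) / 2| * |g1 θ| ≤ (W * (C2 θ * S) / 2) * (1 / Z1) :=
          mul_le_mul ha hb (abs_nonneg _) hcoef
      _ = W * S / (2 * Z1) * C2 θ := by
          field_simp
  have hterm2int : Integrable (fun θ => c0 * g1 θ) ρ0 := hg1int.const_mul c0
  have hhg1eq : (fun θ => h θ * g1 θ)
      = fun θ => W * (l1 θ - l2 θ) / 2 * g1 θ + c0 * g1 θ := by
    funext θ
    rw [hhdef]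
    simp only
    ring
  have hhg1int : Integrable (fun θ => h θ * g1 θ) ρ0 := by
    rw [hhg1eq]
    exact hterm1int.add hterm2int
  set J : ℝ := ∫ θ, h θ * g1 θ ∂ρ0 with hJdef
  have hI12 : Integrable (fun θ => g1 θ + g2 θ) ρ0 := hg1int.add hg2int
  have hsqint : Integrable (fun θ => Real.sqrt (g1 θ * g2 θ)) ρ0 := by
    refine hI12.mono ((hg1m.mul hg2m).sqrt).aestronglyMeasurable
      (Eventually.of_forall fun θ => ?_)
    simp only [Real.norm_eq_abs]
    rw [abs_of_nonneg (Real.sqrt_nonneg _), abs_of_nonneg (add_pos (hg1pos θ) (hg2pos θ)).le]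
    calc Real.sqrt (g1 θ * g2 θ) ≤ (g1 θ + g2 θ) / 2 := by
          rw [← Real.sqrt_mul_self (by linarith [hg1pos θ, hg2pos θ] : (0:ℝ) ≤ (g1 θ + g2 θ)/2)]
          apply Real.sqrt_le_sqrt
          nlinarith [sq_nonneg (g1 θ - g2 θ)]
      _ ≤ g1 θ + g2 θ := by linarith [(hg1pos θ).le, (hg2pos θ).le]
  have hBClow : Real.exp J ≤ ∫ θ, Real.sqrt (g1 θ * g2 θ) ∂ρ0 := by
    have htan : ∀ θ, Real.exp J * ((1 - J) * g1 θ + h θ * g1 θ) ≤ Real.sqrt (g1 θ * g2 θ) := by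
      intro θ
      rw [hpt θ]
      have h1 : (h θ - J) + 1 ≤ Real.exp (h θ - J) := by
        have := Real.add_one_le_exp (h θ - J)
        linarith
      have h2 : Real.exp (h θ) = Real.exp J * Real.exp (h θ - J) := by
        rw [← Real.exp_add]
        congr 1
        ring
      rw [h2]
      have h3 := mul_le_mul_of_nonneg_left h1
        (mul_nonneg (Real.exp_pos J).le (hg1pos θ).le)
      nlinarith [h3]
    have hlhsint : Integrable (fun θ => Real.exp J * ((1 - J) * g1 θ + h θ * g1 θ)) ρ0 :=
      ((hg1int.const_mul (1 - J)).add hhg1int).const_mul _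
    have hmono := integral_mono hlhsint hsqint htan
    calc Real.exp J = ∫ θ, Real.exp J * ((1 - J) * g1 θ + h θ * g1 θ) ∂ρ0 := by
          rw [integral_const_mul, integral_add (hg1int.const_mul _) hhg1int,
            integral_const_mul, hg1one, ← hJdef]
          ring
      _ ≤ _ := hmono
  have hJsplit : J = (∫ θ, W * (l1 θ - l2 θ) / 2 * g1 θ ∂ρ0) + c0 := by
    rw [hJdef, hhg1eq, integral_add hterm1int hterm2int, integral_const_mul, hg1one, mul_one]
  have hterm1low : -(W * S / (2 * Z1) * Cb) ≤ ∫ θ, W * (l1 θ - l2 θ) / 2 * g1 θ ∂ρ0 := by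
    have hptlow : ∀ θ, -(W * S / (2 * Z1)) * C2 θ ≤ W * (l1 θ - l2 θ) / 2 * g1 θ := by
      intro θ
      have h1 : -(C2 θ * S) ≤ l1 θ - l2 θ := by
        have := abs_le.mp (hldiff θ)
        linarith [this.1]
      have hg1nn := (hg1pos θ).le
      have h2 : -(W * (C2 θ * S) / 2) * g1 θ ≤ W * (l1 θ - l2 θ) / 2 * g1 θ := by
        apply mul_le_mul_of_nonneg_right ?_ hg1nn
        nlinarith
      have hcoef : 0 ≤ W * (C2 θ * S) / 2 :=
        div_nonneg (mul_nonneg hW.le (mul_nonneg (hC2nn θ) hS0)) two_pos.le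
      have h4 := mul_le_mul_of_nonneg_left (hg1le θ) hcoef
      have h5 : W * (C2 θ * S) / 2 * (1 / Z1) = W * S / (2 * Z1) * C2 θ := by
        field_simp
      nlinarith [h2, h4]
    have hmono := integral_mono (hC2integrable.const_mul (-(W * S / (2 * Z1)))) hterm1int hptlow
    rw [integral_const_mul, ← hCbdef] at hmono
    linarith
  have hc0low : -(W * S / (2 * Z1) * Cb) ≤ c0 := by
    have hptz : ∀ θ, e2 θ - e1 θ ≤ W * S * C2 θ := by
      intro θ
      rw [he1eq θ, he2eq θ, neg_mul, neg_mul]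
      have hd := exp_neg_sub_exp_neg_le (W * l2 θ) (W * l1 θ)
        (mul_nonneg hW.le (hl2nn θ)) (mul_nonneg hW.le (hl1nn θ))
      have habs : |W * l2 θ - W * l1 θ| ≤ W * S * C2 θ := by
        rw [← mul_sub, abs_mul, abs_of_pos hW, abs_sub_comm]
        have := hldiff θ
        nlinarith
      linarith
    have hzdiff : Z2 - Z1 ≤ W * S * Cb := by
      have hdint : Integrable (fun θ => e2 θ - e1 θ) ρ0 := he2int.sub he1int
      have hmono := integral_mono hdint (hC2integrable.const_mul (W * S)) hptz
      rw [integral_sub he2int he1int, ← hZ2eq, ← hZ1eq, integral_const_mul, ← hCbdef] at hmono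
      exact hmono
    have hlog : Real.log Z2 - Real.log Z1 ≤ (Z2 - Z1) / Z1 := by
      have h1 : Real.log (Z2 / Z1) ≤ Z2 / Z1 - 1 :=
        Real.log_le_sub_one_of_pos (div_pos hZ2pos hZ1pos)
      rw [Real.log_div hZ2pos.ne' hZ1pos.ne'] at h1
      have h2 : Z2 / Z1 - 1 = (Z2 - Z1) / Z1 := by
        field_simp
      linarith
    have h3 : (Z2 - Z1) / Z1 ≤ W * S * Cb / Z1 :=
      (div_le_div_iff_of_pos_right hZ1pos).mpr hzdiff
    have h4 : W * S / (2 * Z1) * Cb = (W * S * Cb / Z1) / 2 := by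
      rw [div_div]
      ring
    rw [hc0def]
    linarith
  have hJlow : -(W * S / Z1 * Cb) ≤ J := by
    rw [hJsplit]
    have heq : W * S / Z1 * Cb = W * S / (2 * Z1) * Cb + W * S / (2 * Z1) * Cb := by
      field_simp
      ring
    linarith
  have hmono : Real.exp (-(W * S / Z1 * Cb)) ≤ Real.exp J := Real.exp_le_exp.mpr (by linarith)
  linarith [hBClow, hmono]

lemma le_one_add_sq (u : ℝ) (hu : 0 ≤ u) : u ≤ (1 + u) ^ 2 := by nlinarith

lemma one_sub_sq_le (u y : ℝ) (hu0 : 0 < u) (hu1 : u ≤ 1) (hy : y ≤ u * u) :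
    (1 - u) ^ 2 ≤ 1 - y := by nlinarith

/-- Theorem 1, Hellinger part: stability of Gibbs posteriors in the data,
in squared Hellinger distance:
`d_H²(ρ̂₁, ρ̂₂) ≤ sqrt(1 − exp(−a W (1 + e^{bnW})² ∑ᵢ ‖y_{1,i} − y_{2,i}‖))`. -/
theorem gibbs_stability_hellinger
    {p d : ℕ}
    (ρ0 : Measure (Par p)) (P : Measure (Obs d))
    [IsProbabilityMeasure ρ0] [IsProbabilityMeasure P]
    (L : Par p → Obs d → ℝ) (f : Par p → ℝ)
    (hL : Assumption1 ρ0 P L) (hprior : Assumption2 ρ0 f)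
    (r : ℝ) (hr : 0 < r) :
    ∃ a > (0 : ℝ), ∃ b > (0 : ℝ),
      ∀ (n : ℕ) (W : ℝ), 0 < W →
        ∀ ys1 ys2 : Fin n → Obs d,
          (∀ i, ‖ys1 i‖ < r) → (∀ i, ‖ys2 i‖ < r) →
          hellingerSq (gibbs ρ0 L ys1 W) (gibbs ρ0 L ys2 W)
            ≤ Real.sqrt (1 - Real.exp
                (-(a * W * (1 + Real.exp (b * n * W)) ^ 2 * ∑ i, ‖ys1 i - ys2 i‖))) := by
  classical
  have hLy : ∀ y : Obs d, Measurable fun θ : Par p => L θ y := fun y =>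
    hL.measurable.comp (measurable_id.prodMk measurable_const)
  -- a ball of positive prior mass
  obtain ⟨R0, hR0⟩ : ∃ k : ℕ, 0 < ρ0 (Metric.ball (0 : Par p) ((k : ℝ) + 1)) := by
    by_contra h
    push_neg at h
    have h0 : ∀ k : ℕ, ρ0 (Metric.ball (0 : Par p) ((k : ℝ) + 1)) = 0 := fun k =>
      le_antisymm (h k) zero_le
    have hcover : (Set.univ : Set (Par p)) ⊆ ⋃ k : ℕ, Metric.ball (0 : Par p) ((k : ℝ) + 1) := by
      intro θ _
      refine Set.mem_iUnion.mpr ⟨⌈‖θ‖⌉₊, ?_⟩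
      rw [Metric.mem_ball, dist_zero_right]
      have := Nat.le_ceil ‖θ‖
      linarith
    have hz : ρ0 Set.univ = 0 := measure_mono_null hcover (measure_iUnion_null h0)
    simp [measure_univ] at hz
  set R : ℝ := (R0 : ℝ) + 1 with hRdef
  have hRpos : (0:ℝ) < R := by positivity
  obtain ⟨C1, hC1nn, hC1int, hC1lip⟩ := hL.lipschitz_param R hRpos
  obtain ⟨C2, hC2nn, hC2int, hC2lip⟩ := hL.lipschitz_data r hr
  -- a measurable a.e.-version of C2
  set C2' : Par p → ℝ := fun θ => Real.log (hC2int.aestronglyMeasurable.mk _ θ) with hC2'def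
  have hC2'meas : Measurable C2' :=
    Real.measurable_log.comp hC2int.aestronglyMeasurable.stronglyMeasurable_mk.measurable
  have hC2ae : C2 =ᵐ[ρ0] C2' := by
    filter_upwards [hC2int.aestronglyMeasurable.ae_eq_mk] with θ hθ
    rw [hC2'def]
    simp only
    rw [← hθ, Real.log_exp]
  -- cutoff level for C2
  obtain ⟨mc, hmc⟩ : ∃ m : ℕ,
      0 < ρ0 (Metric.ball (0 : Par p) R ∩ {θ | C2' θ ≤ (m : ℝ)}) := by
    by_contra h
    push_neg at h
    have h0 : ∀ m : ℕ, ρ0 (Metric.ball (0 : Par p) R ∩ {θ | C2' θ ≤ (m : ℝ)}) = 0 := fun m =>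
      le_antisymm (h m) zero_le
    have hcover : Metric.ball (0 : Par p) R ⊆
        ⋃ m : ℕ, (Metric.ball (0 : Par p) R ∩ {θ | C2' θ ≤ (m : ℝ)}) := by
      intro θ hθ
      obtain ⟨m, hm⟩ := exists_nat_ge (C2' θ)
      exact Set.mem_iUnion.mpr ⟨m, hθ, hm⟩
    have hz : ρ0 (Metric.ball (0 : Par p) R) = 0 :=
      measure_mono_null hcover (measure_iUnion_null h0)
    rw [hz] at hR0
    exact lt_irrefl _ hR0
  set E : Set (Par p) := Metric.ball (0 : Par p) R ∩ {θ | C2' θ ≤ (mc : ℝ)} with hEdef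
  have hEmeas : MeasurableSet E :=
    measurableSet_ball.inter (hC2'meas measurableSet_Iic)
  set δ : ℝ := (ρ0 E).toReal with hδdef
  have hδpos : 0 < δ := ENNReal.toReal_pos hmc.ne' (measure_ne_top _ _)
  set A : ℝ := L 0 0 + C1 0 * R with hAdef
  have hA0 : 0 ≤ A := add_nonneg (hL.nonneg 0 0) (mul_nonneg (hC1nn 0) hRpos.le)
  have hC2sm : AEStronglyMeasurable C2 ρ0 :=
    (hC2'meas.stronglyMeasurable.aestronglyMeasurable).congr hC2ae.symm
  have hC2integrable : Integrable C2 ρ0 := by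
    refine hC2int.mono hC2sm (Eventually.of_forall fun θ => ?_)
    rw [Real.norm_eq_abs, Real.norm_eq_abs, abs_of_nonneg (hC2nn θ),
      abs_of_nonneg (Real.exp_pos _).le]
    linarith [Real.add_one_le_exp (C2 θ)]
  set Cb : ℝ := ∫ θ, C2 θ ∂ρ0 with hCbdef
  have hCb0 : 0 ≤ Cb := integral_nonneg hC2nn
  set b : ℝ := A + (mc : ℝ) * r + 1 with hbdef
  have hbpos : 0 < b := by positivity
  refine ⟨2 * Cb / δ + 1, by positivity, b, hbpos, ?_⟩
  intro n W hW ys1 ys2 hy1 hy2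
  set S : ℝ := ∑ i, ‖ys1 i - ys2 i‖ with hSdef
  have hS0 : 0 ≤ S := Finset.sum_nonneg fun i _ => norm_nonneg _
  -- loss sums
  set l1 : Par p → ℝ := fun θ => ∑ i, L θ (ys1 i) with hl1def
  set l2 : Par p → ℝ := fun θ => ∑ i, L θ (ys2 i) with hl2def
  have hl1m : Measurable l1 := Finset.measurable_sum _ fun i _ => hLy (ys1 i)
  have hl2m : Measurable l2 := Finset.measurable_sum _ fun i _ => hLy (ys2 i)
  have hl1nn : ∀ θ, 0 ≤ l1 θ := fun θ => Finset.sum_nonneg fun i _ => hL.nonneg θ (ys1 i)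
  have hl2nn : ∀ θ, 0 ≤ l2 θ := fun θ => Finset.sum_nonneg fun i _ => hL.nonneg θ (ys2 i)
  have hldiff : ∀ θ, |l1 θ - l2 θ| ≤ C2 θ * S := by
    intro θ
    rw [hl1def, hl2def]
    simp only
    rw [← Finset.sum_sub_distrib]
    refine (Finset.abs_sum_le_sum_abs _ _).trans ?_
    rw [hSdef, Finset.mul_sum]
    exact Finset.sum_le_sum fun i _ => hC2lip θ (ys1 i) (ys2 i) (hy1 i) (hy2 i)
  -- rewriting the exponent
  have hkey : ∀ (ys : Fin n → Obs d) θ,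
      -((n : ℝ) * W) * empRisk L ys θ = -W * ∑ i, L θ (ys i) := by
    intro ys θ
    rw [empRisk]
    rcases Nat.eq_zero_or_pos n with hn | hn
    · subst hn
      simp
    · have hn0 : (n : ℝ) ≠ 0 := Nat.cast_ne_zero.mpr hn.ne'
      field_simp
  have hkey1 : ∀ θ, -((n : ℝ) * W) * empRisk L ys1 θ = -W * l1 θ := fun θ => hkey ys1 θ
  have hkey2 : ∀ θ, -((n : ℝ) * W) * empRisk L ys2 θ = -W * l2 θ := fun θ => hkey ys2 θ
  set e1 : Par p → ℝ := fun θ => Real.exp (-((n : ℝ) * W) * empRisk L ys1 θ) with he1def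
  set e2 : Par p → ℝ := fun θ => Real.exp (-((n : ℝ) * W) * empRisk L ys2 θ) with he2def
  have he1eq : ∀ θ, e1 θ = Real.exp (-W * l1 θ) := fun θ => by rw [he1def]; simp only; rw [hkey1]
  have he2eq : ∀ θ, e2 θ = Real.exp (-W * l2 θ) := fun θ => by rw [he2def]; simp only; rw [hkey2]
  have he1pos : ∀ θ, 0 < e1 θ := fun θ => Real.exp_pos _
  have he2pos : ∀ θ, 0 < e2 θ := fun θ => Real.exp_pos _
  have he1le1 : ∀ θ, e1 θ ≤ 1 := fun θ => by
    rw [he1eq θ]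
    exact Real.exp_le_one_iff.mpr (by nlinarith [hl1nn θ])
  have he2le1 : ∀ θ, e2 θ ≤ 1 := fun θ => by
    rw [he2eq θ]
    exact Real.exp_le_one_iff.mpr (by nlinarith [hl2nn θ])
  have hRm : ∀ ys : Fin n → Obs d, Measurable (empRisk L ys) := fun ys =>
    (Finset.measurable_sum _ fun i _ => hLy (ys i)).const_mul (1 / (n : ℝ))
  have he1m : Measurable e1 := ((hRm ys1).const_mul _).exp
  have he2m : Measurable e2 := ((hRm ys2).const_mul _).exp
  have he1int : Integrable e1 ρ0 := by
    refine (integrable_const (1:ℝ)).mono' he1m.aestronglyMeasurable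
      (Eventually.of_forall fun θ => ?_)
    rw [Real.norm_eq_abs, abs_of_nonneg (he1pos θ).le]
    exact he1le1 θ
  have he2int : Integrable e2 ρ0 := by
    refine (integrable_const (1:ℝ)).mono' he2m.aestronglyMeasurable
      (Eventually.of_forall fun θ => ?_)
    rw [Real.norm_eq_abs, abs_of_nonneg (he2pos θ).le]
    exact he2le1 θ
  set Z1 : ℝ := partition ρ0 L ys1 W with hZ1def
  set Z2 : ℝ := partition ρ0 L ys2 W with hZ2def
  have hZ1eq : Z1 = ∫ θ, e1 θ ∂ρ0 := rfl
  have hZ2eq : Z2 = ∫ θ, e2 θ ∂ρ0 := rfl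
  -- lower bound on partition functions
  set zl : ℝ := δ * Real.exp (-(W * ((n : ℝ) * (A + (mc : ℝ) * r)))) with hzldef
  have hzlpos : 0 < zl := mul_pos hδpos (Real.exp_pos _)
  have hZlow : ∀ (ys : Fin n → Obs d) (e : Par p → ℝ), (∀ i, ‖ys i‖ < r) →
      (∀ θ, e θ = Real.exp (-W * ∑ i, L θ (ys i))) → Measurable e → Integrable e ρ0 →
      zl ≤ ∫ θ, e θ ∂ρ0 := by
    intro ys e hy he hem heint
    have hEbound : ∀ᵐ θ ∂ρ0.restrict E,
        Real.exp (-(W * ((n : ℝ) * (A + (mc : ℝ) * r)))) ≤ e θ := by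
      filter_upwards [ae_restrict_of_ae hC2ae, ae_restrict_mem hEmeas] with θ hc hmem
      obtain ⟨hball, hcut⟩ := hmem
      have hθR : ‖θ‖ < R := by
        rw [Metric.mem_ball, dist_zero_right] at hball
        exact hball
      have hC2θ : C2 θ ≤ (mc : ℝ) := hc ▸ hcut
      have hLbound : ∀ i, L θ (ys i) ≤ A + (mc : ℝ) * r := by
        intro i
        have h0r : ‖(0 : Obs d)‖ < r := by simpa using hr
        have h0R : ‖(0 : Par p)‖ < R := by simpa using hRpos
        have hy0 : |L θ (ys i) - L θ 0| ≤ C2 θ * ‖ys i - 0‖ := hC2lip θ (ys i) 0 (hy i) h0r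
        have hθ0 : |L θ 0 - L 0 0| ≤ C1 0 * ‖θ - 0‖ := hC1lip θ 0 0 hθR h0R
        rw [sub_zero] at hy0 hθ0
        have h1 : C2 θ * ‖ys i‖ ≤ (mc : ℝ) * r := by
          have := (hy i).le
          nlinarith [hC2nn θ, norm_nonneg (ys i), Nat.cast_nonneg (α := ℝ) mc]
        have h2 : C1 0 * ‖θ‖ ≤ C1 0 * R := by
          nlinarith [hC1nn 0]
        rw [hAdef]
        have := abs_le.mp hy0
        have := abs_le.mp hθ0
        nlinarith
      have hsum : ∑ i, L θ (ys i) ≤ (n : ℝ) * (A + (mc : ℝ) * r) := by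
        calc ∑ i, L θ (ys i) ≤ ∑ _i : Fin n, (A + (mc : ℝ) * r) :=
              Finset.sum_le_sum fun i _ => hLbound i
          _ = (n : ℝ) * (A + (mc : ℝ) * r) := by
              rw [Finset.sum_const, Finset.card_univ, Fintype.card_fin, nsmul_eq_mul]
      rw [he θ]
      apply Real.exp_le_exp.mpr
      nlinarith
    have h1 : ∫ θ in E, e θ ∂ρ0 ≤ ∫ θ, e θ ∂ρ0 := by
      apply setIntegral_le_integral heint
      filter_upwards with θ
      rw [he θ]
      exact (Real.exp_pos _).le
    have h2 : zl ≤ ∫ θ in E, e θ ∂ρ0 := by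
      have hc := setIntegral_mono_ae_restrict
        (integrableOn_const (measure_lt_top ρ0 E).ne) heint.integrableOn hEbound
      rw [setIntegral_const] at hc
      rw [hzldef, hδdef]
      simpa [smul_eq_mul, Measure.real] using hc
    linarith
  have hZ1low : zl ≤ Z1 := hZ1eq ▸ hZlow ys1 e1 hy1 he1eq he1m he1int
  have hZ2low : zl ≤ Z2 := hZ2eq ▸ hZlow ys2 e2 hy2 he2eq he2m he2int
  have hZ1pos : 0 < Z1 := lt_of_lt_of_le hzlpos hZ1low
  have hZ2pos : 0 < Z2 := lt_of_lt_of_le hzlpos hZ2low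
  -- the densities
  set g1 : Par p → ℝ := fun θ => e1 θ / Z1 with hg1def
  set g2 : Par p → ℝ := fun θ => e2 θ / Z2 with hg2def
  have hg1m : Measurable g1 := he1m.div_const _
  have hg2m : Measurable g2 := he2m.div_const _
  have hg1pos : ∀ θ, 0 < g1 θ := fun θ => div_pos (he1pos θ) hZ1pos
  have hg2pos : ∀ θ, 0 < g2 θ := fun θ => div_pos (he2pos θ) hZ2pos
  have hg1int : Integrable g1 ρ0 := he1int.div_const _
  have hg2int : Integrable g2 ρ0 := he2int.div_const _
  have hg1one : ∫ θ, g1 θ ∂ρ0 = 1 := by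
    rw [hg1def]
    simp only
    rw [integral_div, ← hZ1eq, div_self hZ1pos.ne']
  have hg2one : ∫ θ, g2 θ ∂ρ0 = 1 := by
    rw [hg2def]
    simp only
    rw [integral_div, ← hZ2eq, div_self hZ2pos.ne']
  have hg1le : ∀ θ, g1 θ ≤ 1 / Z1 := fun θ => by
    rw [hg1def]
    simp only
    gcongr
    exact he1le1 θ
  -- Hellinger identity
  have hHell : hellingerSq (gibbs ρ0 L ys1 W) (gibbs ρ0 L ys2 W)
      = 1 - ∫ θ, Real.sqrt (g1 θ * g2 θ) ∂ρ0 := by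
    have h1 : gibbs ρ0 L ys1 W = ρ0.withDensity fun θ => ENNReal.ofReal (g1 θ) := rfl
    have h2 : gibbs ρ0 L ys2 W = ρ0.withDensity fun θ => ENNReal.ofReal (g2 θ) := rfl
    rw [h1, h2]
    exact hellingerSq_withDensity_eq ρ0 hg1m hg2m hg1pos hg2pos hg1int hg2int hg1one hg2one
  have hBC0 := bhatta_jensen ρ0 e1 e2 C2 l1 l2 W S Z1 Z2 Cb hW hS0 he1eq he2eq
    hl1m hl2m hl1nn hl2nn hC2nn hC2integrable hCbdef hldiff he1int he2int hZ1eq hZ2eq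
    hZ1pos hZ2pos
  have hBC' : Real.exp (-(W * S / Z1 * Cb)) ≤ ∫ θ, Real.sqrt (g1 θ * g2 θ) ∂ρ0 := hBC0
  -- final arithmetic
  set K0 : ℝ := W * S / Z1 * Cb with hK0def
  have hK00 : 0 ≤ K0 :=
    mul_nonneg (div_nonneg (mul_nonneg hW.le hS0) hZ1pos.le) hCb0
  set x : ℝ := (2 * Cb / δ + 1) * W * (1 + Real.exp (b * (n : ℝ) * W)) ^ 2 * S with hxdef
  have hT : Real.exp (W * ((n : ℝ) * (A + (mc : ℝ) * r))) ≤ Real.exp (b * (n : ℝ) * W) := by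
    apply Real.exp_le_exp.mpr
    have hn0 : (0 : ℝ) ≤ (n : ℝ) := Nat.cast_nonneg n
    have heqb : b * (n : ℝ) * W = W * ((n : ℝ) * (A + (mc : ℝ) * r)) + (n : ℝ) * W := by
      rw [hbdef]
      ring
    have hnW : 0 ≤ (n : ℝ) * W := mul_nonneg hn0 hW.le
    linarith
  have hsq : Real.exp (b * (n : ℝ) * W) ≤ (1 + Real.exp (b * (n : ℝ) * W)) ^ 2 :=
    le_one_add_sq _ (Real.exp_pos _).le
  have hK1 : K0 ≤ W * S * Cb / δ * Real.exp (W * ((n : ℝ) * (A + (mc : ℝ) * r))) := by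
    have h1 : 1 / Z1 ≤ 1 / zl := one_div_le_one_div_of_le hzlpos hZ1low
    have h2 : 1 / zl = 1 / δ * Real.exp (W * ((n : ℝ) * (A + (mc : ℝ) * r))) := by
      rw [hzldef, Real.exp_neg]
      field_simp
    have h3 : 0 ≤ W * S * Cb := mul_nonneg (mul_nonneg hW.le hS0) hCb0
    calc K0 = (W * S * Cb) * (1 / Z1) := by rw [hK0def]; ring
      _ ≤ (W * S * Cb) * (1 / zl) := mul_le_mul_of_nonneg_left h1 h3
      _ = W * S * Cb / δ * Real.exp (W * ((n : ℝ) * (A + (mc : ℝ) * r))) := by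
          rw [h2]
          ring
  have hKx : 2 * K0 ≤ x := by
    have hWS : 0 ≤ W * S := mul_nonneg hW.le hS0
    have hcoefnn : 0 ≤ W * S * Cb / δ := by positivity
    have step1 : 2 * K0 ≤ 2 * (W * S * Cb / δ * Real.exp (b * (n : ℝ) * W)) := by
      have := mul_le_mul_of_nonneg_left hT hcoefnn
      linarith [hK1]
    have step2 : 2 * (W * S * Cb / δ * Real.exp (b * (n : ℝ) * W))
        ≤ 2 * (W * S * Cb / δ * (1 + Real.exp (b * (n : ℝ) * W)) ^ 2) := by
      have := mul_le_mul_of_nonneg_left hsq hcoefnn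
      linarith
    have step3 : 2 * (W * S * Cb / δ * (1 + Real.exp (b * (n : ℝ) * W)) ^ 2) ≤ x := by
      rw [hxdef]
      have heq : 2 * (W * S * Cb / δ * (1 + Real.exp (b * (n : ℝ) * W)) ^ 2)
          = (2 * Cb / δ) * W * (1 + Real.exp (b * (n : ℝ) * W)) ^ 2 * S := by
        ring
      rw [heq]
      have hfac : 0 ≤ W * (1 + Real.exp (b * (n : ℝ) * W)) ^ 2 * S :=
        mul_nonneg (mul_nonneg hW.le (sq_nonneg _)) hS0
      have heq2 : (2 * Cb / δ + 1) * W * (1 + Real.exp (b * (n : ℝ) * W)) ^ 2 * S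
          = (2 * Cb / δ) * W * (1 + Real.exp (b * (n : ℝ) * W)) ^ 2 * S
            + W * (1 + Real.exp (b * (n : ℝ) * W)) ^ 2 * S := by
        ring
      linarith
    linarith
  have hBC : Real.exp (-K0) ≤ ∫ θ, Real.sqrt (g1 θ * g2 θ) ∂ρ0 := hBC'
  have hfinal : 1 - Real.exp (-K0) ≤ Real.sqrt (1 - Real.exp (-x)) := by
    have hu1 : Real.exp (-K0) ≤ 1 := Real.exp_le_one_iff.mpr (by linarith)
    have hu0 : 0 < Real.exp (-K0) := Real.exp_pos _
    rw [← Real.sqrt_sq (by linarith : (0 : ℝ) ≤ 1 - Real.exp (-K0))]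
    apply Real.sqrt_le_sqrt
    have hxx : Real.exp (-x) ≤ Real.exp (-(2 * K0)) := Real.exp_le_exp.mpr (by linarith)
    have hsq2 : Real.exp (-(2 * K0)) = Real.exp (-K0) * Real.exp (-K0) := by
      rw [← Real.exp_add]
      congr 1
      ring
    exact one_sub_sq_le _ _ hu0 hu1 (by rw [← hsq2]; exact hxx)
  rw [hHell]
  linarith [hBC, hfinal]
end
end

section
/- (Theorem 2.) Fix data y_1,…,y_n ∈ Y with max_i ‖y_i‖ < r for some r > 0, and suppose Assumptions 1–2 hold. Then the map W ↦ ρ̂_n^W, from (0,∞) to the space of probability measures on Θ, is continuous with respect to the Hellinger distance: for every W > 0, d_H(ρ̂_n^{W'}, ρ̂_n^W) → 0 as W' → W. -/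
open MeasureTheory Real Filter Topology
open scoped ENNReal NNReal

noncomputable section

lemma sq_sqrt_sub_sqrt_le {a b : ℝ} (ha : 0 ≤ a) (hb : 0 ≤ b) :
    (Real.sqrt a - Real.sqrt b) ^ 2 ≤ |a - b| := by
  rcases le_total a b with h | h
  · rw [abs_of_nonpos (by linarith)]
    nlinarith [Real.sq_sqrt ha, Real.sq_sqrt hb, Real.sqrt_nonneg a, Real.sqrt_nonneg b,
      Real.sqrt_le_sqrt h, mul_self_nonneg (Real.sqrt a - Real.sqrt b)]
  · rw [abs_of_nonneg (by linarith)]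
    nlinarith [Real.sq_sqrt ha, Real.sq_sqrt hb, Real.sqrt_nonneg a, Real.sqrt_nonneg b,
      Real.sqrt_le_sqrt h, mul_self_nonneg (Real.sqrt a - Real.sqrt b)]

lemma hellingerSq_withDensity {α : Type*} [MeasurableSpace α] (ρ0 : Measure α) [SigmaFinite ρ0]
    {u v : α → ℝ} (hu : Measurable u) (hv : Measurable v)
    (hupos : ∀ x, 0 < u x) (hvpos : ∀ x, 0 < v x) :
    hellingerSq (ρ0.withDensity fun x => ENNReal.ofReal (u x))
        (ρ0.withDensity fun x => ENNReal.ofReal (v x))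
      = (1 / 2) * ∫ x, (Real.sqrt (u x) - Real.sqrt (v x)) ^ 2 ∂ρ0 := by
  set μ := ρ0.withDensity fun x => ENNReal.ofReal (u x) with hμdef
  set ν := ρ0.withDensity fun x => ENNReal.ofReal (v x) with hνdef
  set s : α → ℝ≥0∞ := fun x => ENNReal.ofReal (u x + v x) with hsdef
  have hs_meas : Measurable s := (hu.add hv).ennreal_ofReal
  have hs_ne_zero : ∀ x, s x ≠ 0 := fun x => by
    simp only [hsdef, ne_eq, ENNReal.ofReal_eq_zero, not_le]
    linarith [hupos x, hvpos x]
  have hs_ne_top : ∀ x, s x ≠ ∞ := fun x => ENNReal.ofReal_ne_top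
  have hsum : μ + ν = ρ0.withDensity s := by
    rw [hμdef, hνdef, ← withDensity_add_left (hu.ennreal_ofReal)]
    congr 1
    funext x
    simp [hsdef, ENNReal.ofReal_add (hupos x).le (hvpos x).le]
  have hsf : SigmaFinite (ρ0.withDensity s) :=
    MeasureTheory.SigmaFinite.withDensity_of_ne_top' hs_ne_top
  set du : α → ℝ≥0∞ := fun x => ENNReal.ofReal (u x) / s x with hdudef
  set dv : α → ℝ≥0∞ := fun x => ENNReal.ofReal (v x) / s x with hdvdef
  have hdu_meas : Measurable du := hu.ennreal_ofReal.div hs_meas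
  have hdv_meas : Measurable dv := hv.ennreal_ofReal.div hs_meas
  have hμ : μ = (ρ0.withDensity s).withDensity du := by
    rw [← withDensity_mul ρ0 hs_meas hdu_meas, hμdef,
      show (fun x => ENNReal.ofReal (u x)) = s * du from
        funext fun x => (ENNReal.mul_div_cancel (hs_ne_zero x) (hs_ne_top x)).symm]
  have hν : ν = (ρ0.withDensity s).withDensity dv := by
    rw [← withDensity_mul ρ0 hs_meas hdv_meas, hνdef,
      show (fun x => ENNReal.ofReal (v x)) = s * dv from
        funext fun x => (ENNReal.mul_div_cancel (hs_ne_zero x) (hs_ne_top x)).symm]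
  have h1 : μ.rnDeriv (μ + ν) =ᵐ[μ + ν] du := by
    rw [hsum]; rw [hμ]
    exact Measure.rnDeriv_withDensity (ρ0.withDensity s) hdu_meas
  have h2 : ν.rnDeriv (μ + ν) =ᵐ[μ + ν] dv := by
    rw [hsum]; rw [hν]
    exact Measure.rnDeriv_withDensity (ρ0.withDensity s) hdv_meas
  unfold hellingerSq
  congr 1
  have hcongr : ∫ x, (Real.sqrt ((μ.rnDeriv (μ + ν) x).toReal)
      - Real.sqrt ((ν.rnDeriv (μ + ν) x).toReal)) ^ 2 ∂(μ + ν)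
      = ∫ x, (Real.sqrt ((du x).toReal) - Real.sqrt ((dv x).toReal)) ^ 2 ∂(μ + ν) := by
    refine integral_congr_ae ?_
    filter_upwards [h1, h2] with x e1 e2
    rw [e1, e2]
  rw [hcongr, hsum]
  have hs_eq : s = fun x => ((u x + v x).toNNReal : ℝ≥0∞) := rfl
  rw [hs_eq, integral_withDensity_eq_integral_smul (f := fun x => (u x + v x).toNNReal) ((hu.add hv).real_toNNReal)]
  refine integral_congr_ae (Eventually.of_forall fun x => ?_)
  show (u x + v x).toNNReal • (Real.sqrt ((du x).toReal) - Real.sqrt ((dv x).toReal)) ^ 2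
      = (Real.sqrt (u x) - Real.sqrt (v x)) ^ 2
  have hA : (0:ℝ) < u x := hupos x
  have hB : (0:ℝ) < v x := hvpos x
  have hS : (0:ℝ) < u x + v x := by linarith
  have hdu_toReal : (du x).toReal = u x / (u x + v x) := by
    rw [hdudef]
    simp only [hsdef, ENNReal.toReal_div, ENNReal.toReal_ofReal hA.le,
      ENNReal.toReal_ofReal hS.le]
  have hdv_toReal : (dv x).toReal = v x / (u x + v x) := by
    rw [hdvdef]
    simp only [hsdef, ENNReal.toReal_div, ENNReal.toReal_ofReal hB.le,
      ENNReal.toReal_ofReal hS.le]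
  rw [hdu_toReal, hdv_toReal, Real.sqrt_div hA.le, Real.sqrt_div hB.le,
    div_sub_div_same, div_pow, Real.sq_sqrt hS.le, NNReal.smul_def,
    Real.coe_toNNReal _ hS.le]
  rw [smul_eq_mul, mul_div_cancel₀ _ (ne_of_gt hS)]

/-- Theorem 2: for fixed data bounded in norm by some `r > 0`, the map
`W ↦ ρ̂_n^W` from `(0,∞)` to probability measures is continuous in the Hellinger distance:
`d_H(ρ̂_n^{W'}, ρ̂_n^W) → 0` as `W' → W` within `(0,∞)`. -/
theorem gibbs_continuous_in_W
    {p d n : ℕ}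
    (ρ0 : Measure (Par p)) (P : Measure (Obs d))
    [IsProbabilityMeasure ρ0] [IsProbabilityMeasure P]
    (L : Par p → Obs d → ℝ) (f : Par p → ℝ)
    (hL : Assumption1 ρ0 P L) (hprior : Assumption2 ρ0 f)
    (r : ℝ) (hr : 0 < r)
    (ys : Fin n → Obs d) (hys : ∀ i, ‖ys i‖ < r)
    (W : ℝ) (hW : 0 < W) :
    Filter.Tendsto
      (fun W' : ℝ => Real.sqrt (hellingerSq (gibbs ρ0 L ys W') (gibbs ρ0 L ys W)))
      (nhdsWithin W (Set.Ioi (0 : ℝ))) (nhds 0) := by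
  classical
  set R : Par p → ℝ := empRisk L ys with hRdef
  have hRmeas : Measurable R := by
    apply Measurable.const_mul
    exact Finset.measurable_sum _ fun i _ =>
      hL.measurable.comp (measurable_id.prodMk measurable_const)
  have hRnn : ∀ θ, 0 ≤ R θ := fun θ => by
    apply mul_nonneg (by positivity)
    exact Finset.sum_nonneg fun i _ => hL.nonneg θ (ys i)
  set g : ℝ → Par p → ℝ := fun W' θ => Real.exp (-((n : ℝ) * W') * R θ) with hgdef
  have hg_meas : ∀ W', Measurable (g W') := fun W' => (hRmeas.const_mul _).exp
  have hg_pos : ∀ W' θ, 0 < g W' θ := fun W' θ => Real.exp_pos _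
  have hg_le_one : ∀ W', 0 ≤ W' → ∀ θ, g W' θ ≤ 1 := fun W' hW' θ => by
    rw [hgdef, Real.exp_le_one_iff]
    apply mul_nonpos_of_nonpos_of_nonneg _ (hRnn θ)
    simp only [neg_nonpos]
    positivity
  have hg_int : ∀ W', 0 ≤ W' → Integrable (g W') ρ0 := fun W' hW' => by
    refine Integrable.mono' (integrable_const 1) (hg_meas W').aestronglyMeasurable
      (Eventually.of_forall fun θ => ?_)
    rw [Real.norm_eq_abs, abs_of_pos (hg_pos W' θ)]
    exact hg_le_one W' hW' θ
  have hZdef : ∀ W', partition ρ0 L ys W' = ∫ θ, g W' θ ∂ρ0 := fun _ => rfl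
  have hZpos : ∀ W', 0 ≤ W' → 0 < partition ρ0 L ys W' := fun W' hW' => by
    rw [hZdef W',
      integral_pos_iff_support_of_nonneg (fun θ => (hg_pos W' θ).le) (hg_int W' hW')]
    have : Function.support (g W') = Set.univ :=
      Set.eq_univ_of_forall fun θ => (hg_pos W' θ).ne'
    simp [this]
  have hZanti : ∀ a b : ℝ, 0 ≤ a → a ≤ b →
      partition ρ0 L ys b ≤ partition ρ0 L ys a := fun a b ha hab => by
    rw [hZdef a, hZdef b]
    refine integral_mono (hg_int b (ha.trans hab)) (hg_int a ha) fun θ => ?_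
    apply Real.exp_le_exp.mpr
    apply mul_le_mul_of_nonneg_right _ (hRnn θ)
    have : (n : ℝ) * a ≤ (n : ℝ) * b := by
      apply mul_le_mul_of_nonneg_left hab (by positivity)
    linarith
  set Z : ℝ → ℝ := fun W' => partition ρ0 L ys W' with hZ
  set u : ℝ → Par p → ℝ := fun W' θ => g W' θ / Z W' with hudef
  have hu_meas : ∀ W', Measurable (u W') := fun W' => (hg_meas W').div_const _
  have hu_pos : ∀ W', 0 ≤ W' → ∀ θ, 0 < u W' θ := fun W' hW' θ =>
    div_pos (hg_pos W' θ) (hZpos W' hW')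
  have hu_le : ∀ W', 0 ≤ W' → W' ≤ 2 * W → ∀ θ, u W' θ ≤ 1 / Z (2 * W) := by
    intro W' hW'0 hW'2 θ
    exact div_le_div₀ zero_le_one (hg_le_one W' hW'0 θ) (hZpos (2 * W) (by positivity))
      (hZanti W' (2 * W) hW'0 hW'2)
  have hu_int : ∀ W', 0 ≤ W' → Integrable (u W') ρ0 := fun W' hW' =>
    (hg_int W' hW').div_const _
  have hgibbs : ∀ W', gibbs ρ0 L ys W' =
      ρ0.withDensity (fun θ => ENNReal.ofReal (u W' θ)) := fun W' => rfl
  set l : Filter ℝ := nhdsWithin W (Set.Ioi (0 : ℝ)) with hldef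
  have hev_pos : ∀ᶠ W' in l, 0 < W' := self_mem_nhdsWithin
  have hev_lt : ∀ᶠ W' in l, W' < 2 * W :=
    (eventually_lt_nhds (show W < 2 * W by linarith)).filter_mono nhdsWithin_le_nhds
  -- continuity of the partition function
  have hZcont : Tendsto Z l (nhds (Z W)) := by
    rw [hZ]
    simp only [hZdef]
    apply tendsto_integral_filter_of_dominated_convergence (fun _ => (1 : ℝ))
    · exact Eventually.of_forall fun W' => (hg_meas W').aestronglyMeasurable
    · filter_upwards [hev_pos] with W' hW'
      refine Eventually.of_forall fun θ => ?_
      rw [Real.norm_eq_abs, abs_of_pos (hg_pos W' θ)]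
      exact hg_le_one W' hW'.le θ
    · exact integrable_const 1
    · refine Eventually.of_forall fun θ => ?_
      have hc : Continuous fun W' : ℝ => g W' θ := by
        apply Real.continuous_exp.comp
        exact (continuous_const.mul continuous_id).neg.mul continuous_const
      exact (hc.tendsto W).mono_left nhdsWithin_le_nhds
  have hucont : ∀ θ, Tendsto (fun W' => u W' θ) l (nhds (u W θ)) := by
    intro θ
    have hc : Continuous fun W' : ℝ => g W' θ := by
      apply Real.continuous_exp.comp
      exact (continuous_const.mul continuous_id).neg.mul continuous_const
    exact Tendsto.div ((hc.tendsto W).mono_left nhdsWithin_le_nhds) hZcont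
      (hZpos W hW.le).ne'
  -- L¹ convergence of densities
  set F : ℝ → ℝ := fun W' => ∫ θ, |u W' θ - u W θ| ∂ρ0 with hFdef
  have hFto : Tendsto F l (nhds 0) := by
    have h0 : (0 : ℝ) = ∫ (_ : Par p), (0 : ℝ) ∂ρ0 := by simp
    rw [hFdef, h0]
    apply tendsto_integral_filter_of_dominated_convergence
      (fun _ => 1 / Z (2 * W) + 1 / Z W)
    · exact Eventually.of_forall fun W' =>
        (((hu_meas W').sub (hu_meas W)).abs).aestronglyMeasurable
    · filter_upwards [hev_pos, hev_lt] with W' h1 h2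
      refine Eventually.of_forall fun θ => ?_
      rw [Real.norm_eq_abs, abs_abs]
      have b1 : |u W' θ| ≤ 1 / Z (2 * W) := by
        rw [abs_of_pos (hu_pos W' h1.le θ)]; exact hu_le W' h1.le h2.le θ
      have b2 : |u W θ| ≤ 1 / Z W := by
        rw [abs_of_pos (hu_pos W hW.le θ)]
        exact div_le_div₀ zero_le_one (hg_le_one W hW.le θ) (hZpos W hW.le) le_rfl
      calc |u W' θ - u W θ| ≤ |u W' θ| + |u W θ| := abs_sub _ _
        _ ≤ 1 / Z (2 * W) + 1 / Z W := add_le_add b1 b2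
    · exact integrable_const _
    · refine Eventually.of_forall fun θ => ?_
      have := ((hucont θ).sub (tendsto_const_nhds (x := u W θ))).abs
      simpa using this
  -- nonnegativity of hellingerSq
  have hH_nonneg : ∀ W', 0 ≤ hellingerSq (gibbs ρ0 L ys W') (gibbs ρ0 L ys W) := by
    intro W'
    unfold hellingerSq
    exact mul_nonneg (by norm_num) (integral_nonneg fun x => sq_nonneg _)
  -- eventual upper bound
  have hH_le : ∀ᶠ W' in l,
      hellingerSq (gibbs ρ0 L ys W') (gibbs ρ0 L ys W) ≤ (1 / 2) * F W' := by
    filter_upwards [hev_pos] with W' hW'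
    rw [hgibbs W', hgibbs W,
      hellingerSq_withDensity ρ0 (hu_meas W') (hu_meas W)
        (hu_pos W' hW'.le) (hu_pos W hW.le)]
    apply mul_le_mul_of_nonneg_left _ (by norm_num : (0:ℝ) ≤ 1/2)
    refine integral_mono_of_nonneg (Eventually.of_forall fun θ => sq_nonneg _)
      (((hu_int W' hW'.le).sub (hu_int W hW.le)).abs) (Eventually.of_forall fun θ => ?_)
    exact sq_sqrt_sub_sqrt_le (hu_pos W' hW'.le θ).le (hu_pos W hW.le θ).le
  have htend : Tendsto (fun W' => hellingerSq (gibbs ρ0 L ys W') (gibbs ρ0 L ys W))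
      l (nhds 0) := by
    refine squeeze_zero' (Eventually.of_forall fun W' => hH_nonneg W') hH_le ?_
    have := hFto.const_mul (1 / 2 : ℝ)
    simpa using this
  have := htend.sqrt
  simpa using this

end
end
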